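/- Let Γ ∋ −I₂ be a finite-index subgroup of SL₂(ℤ) and ρ : Γ → GL_p(ℂ) a representation. Suppose there exists F = (F₁,…,F_p) ∈ 𝓕(k,ρ,Γ) such that the functions F₁,…,F_p are linearly independent over ℂ. Then: (1) ρ(−I₂) = I_p; (2) for every σ ∈ SL₂(ℤ) and M ∈ ℤ_{>0} with σT^Mσ^{−1} ∈ Γ, there exists N ∈ ℤ_{>0} such that (e^{2πiκM} ρ(σT^Mσ^{−1}))^N = I_p. -/

import Mathlib

noncomputable section

open Complex MeasureTheory Matrix UpperHalfPlane
open scoped Manifold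

/-- The group `SL₂(ℤ)`. -/
abbrev SL2Z := Matrix.SpecialLinearGroup (Fin 2) ℤ
/-- The group `SL₂(ℝ)`. -/
abbrev SL2R := Matrix.SpecialLinearGroup (Fin 2) ℝ

instance : MeasurableSpace ℍ := borel ℍ
instance : TopologicalSpace SL2R := TopologicalSpace.induced (fun g => g.1) inferInstance
instance : MeasurableSpace SL2R := borel SL2R

/-- The matrix `T = [[1,1],[0,1]]`. -/
def Tm : SL2Z := ⟨!![1, 1; 0, 1], by norm_num [Matrix.det_fin_two_of]⟩

/-- `n_x = [[1,x],[0,1]]`. -/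
def nMat (x : ℝ) : SL2R := ⟨!![1, x; 0, 1], by norm_num [Matrix.det_fin_two_of]⟩

/-- `a_y = diag(√y, 1/√y)` for `y > 0`. -/
def aMat (y : ℝ) (hy : 0 < y) : SL2R :=
  ⟨!![Real.sqrt y, 0; 0, (Real.sqrt y)⁻¹], by
    have h : Real.sqrt y ≠ 0 := ne_of_gt (Real.sqrt_pos.mpr hy)
    simp [Matrix.det_fin_two_of, mul_inv_cancel₀ h]⟩

/-- `κ_θ`, rotation by angle `θ`; these constitute `K = SO₂(ℝ)`. -/
def kMat (θ : ℝ) : SL2R :=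
  ⟨!![Real.cos θ, -Real.sin θ; Real.sin θ, Real.cos θ], by
    have := Real.sin_sq_add_cos_sq θ
    simp [Matrix.det_fin_two_of]; nlinarith [this]⟩

/-- The point `i ∈ ℍ`. -/
def ptI : ℍ := ⟨Complex.I, by simp⟩

/-- The automorphy factor `j(γ,τ) = cτ + d` for `γ ∈ SL₂(ℤ)`. -/
def jf (γ : SL2Z) (τ : ℍ) : ℂ := ((γ.1 1 0 : ℤ) : ℂ) * (τ : ℂ) + ((γ.1 1 1 : ℤ) : ℂ)

/-- The automorphy factor `j(g,τ) = cτ + d` for `g ∈ SL₂(ℝ)`. -/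
def jfR (g : SL2R) (τ : ℍ) : ℂ := ((g.1 1 0 : ℝ) : ℂ) * (τ : ℂ) + ((g.1 1 1 : ℝ) : ℂ)

/-- A unitary multiplier system of weight `k` for `SL₂(ℤ)`, satisfying the nontriviality
condition `v(-I₂) = (-1)^{-k}`.  Here `z ^ (k : ℂ)` is the principal complex power,
which coincides with `|z|^k e^{ik·arg z}`, `arg z ∈ (-π,π]`. -/
structure MultiplierSystem (k : ℝ) where
  v : SL2Z → ℂ
  unitary : ∀ γ, ‖v γ‖ = 1
  cocycle : ∀ γ₁ γ₂ : SL2Z, ∀ τ : ℍ,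
    v (γ₁ * γ₂) * jf (γ₁ * γ₂) τ ^ (k : ℂ) =
      v γ₁ * jf γ₁ (γ₂ • τ) ^ (k : ℂ) * (v γ₂ * jf γ₂ τ ^ (k : ℂ))
  neg_one : v (-1) = (-1 : ℂ) ^ (-k : ℂ)

/-- The standard Hermitian norm on `ℂ^ι`. -/
def hnorm {ι : Type} [Fintype ι] (x : ι → ℂ) : ℝ := Real.sqrt (∑ i, ‖x i‖ ^ 2)

/-- The standard Hermitian inner product on `ℂ^ι`. -/
def hinner {ι : Type} [Fintype ι] (x y : ι → ℂ) : ℂ := ∑ i, x i * (starRingEnd ℂ) (y i)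

/-- The slash action `(f|_k γ)(τ) = v(γ)⁻¹ j(γ,τ)^{-k} f(γ.τ)` on scalar-valued functions. -/
def slashC (k : ℝ) (ms : MultiplierSystem k) (f : ℍ → ℂ) (γ : SL2Z) : ℍ → ℂ :=
  fun τ => (ms.v γ)⁻¹ * jf γ τ ^ (-k : ℂ) * f (γ • τ)

/-- The slash action `(F|_k γ)(τ) = v(γ)⁻¹ j(γ,τ)^{-k} F(γ.τ)` on vector-valued functions. -/
def slashV (k : ℝ) (ms : MultiplierSystem k) {ι : Type} (F : ℍ → ι → ℂ) (γ : SL2Z) :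
    ℍ → ι → ℂ :=
  fun τ i => (ms.v γ)⁻¹ * jf γ τ ^ (-k : ℂ) * F (γ • τ) i

/-- The twisted slash action `F|_{k,ρ} γ := ρ(γ)⁻¹ (F|_k γ)`. -/
def slashRho (k : ℝ) (ms : MultiplierSystem k) {ι : Type} [Fintype ι] [DecidableEq ι]
    {Γ : Subgroup SL2Z} (ρ : Γ →* GL ι ℂ) (F : ℍ → ι → ℂ) (γ : Γ) : ℍ → ι → ℂ :=
  fun τ => (((ρ γ)⁻¹ : GL ι ℂ) : Matrix ι ι ℂ).mulVec (slashV k ms F (γ : SL2Z) τ)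

/-- `g` has a Fourier expansion `g(τ) = Σ_{n ≥ h} a_n e^{2πi(n/N)τ}` with lowest exponent
index `h` (for some period `N ∈ ℤ_{>0}`). -/
def HasFourierFrom (h : ℤ) (g : ℍ → ℂ) : Prop :=
  ∃ N : ℕ, 0 < N ∧ ∃ a : ℕ → ℂ, ∀ τ : ℍ,
    HasSum (fun n : ℕ =>
      a n * Complex.exp (2 * Real.pi * Complex.I * (((h + n : ℤ) : ℂ) / (N : ℂ)) * (τ : ℂ)))
      (g τ)

/-- `f ∈ 𝓕(k)`: holomorphic with suitable Fourier expansions at all cusps. -/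
def MemF (k : ℝ) (ms : MultiplierSystem k) (f : ℍ → ℂ) : Prop :=
  MDifferentiable 𝓘(ℂ) 𝓘(ℂ) f ∧ ∀ σ : SL2Z, ∃ h : ℤ, HasFourierFrom h (slashC k ms f σ)

/-- `f ∈ 𝓜(k)`: as `𝓕(k)` but with nonnegative Fourier exponents. -/
def MemM (k : ℝ) (ms : MultiplierSystem k) (f : ℍ → ℂ) : Prop :=
  MDifferentiable 𝓘(ℂ) 𝓘(ℂ) f ∧
    ∀ σ : SL2Z, ∃ h : ℤ, 0 ≤ h ∧ HasFourierFrom h (slashC k ms f σ)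

/-- `f ∈ 𝓢(k)`: as `𝓕(k)` but with strictly positive Fourier exponents. -/
def MemS (k : ℝ) (ms : MultiplierSystem k) (f : ℍ → ℂ) : Prop :=
  MDifferentiable 𝓘(ℂ) 𝓘(ℂ) f ∧
    ∀ σ : SL2Z, ∃ h : ℤ, 0 < h ∧ HasFourierFrom h (slashC k ms f σ)

/-- `F ∈ 𝓕(k,ρ,Γ)`: a vector-valued modular form of weight `k` for `Γ` w.r.t. `ρ`. -/
def MemFV (k : ℝ) (ms : MultiplierSystem k) {ι : Type} [Fintype ι] [DecidableEq ι]
    (Γ : Subgroup SL2Z) (ρ : Γ →* GL ι ℂ) (F : ℍ → ι → ℂ) : Prop :=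
  (∀ i, MemF k ms fun τ => F τ i) ∧
    ∀ γ : Γ, slashV k ms F (γ : SL2Z) =
      fun τ => ((ρ γ : GL ι ℂ) : Matrix ι ι ℂ).mulVec (F τ)

/-- `F ∈ 𝓜(k,ρ,Γ)`: an entire vector-valued modular form. -/
def MemMV (k : ℝ) (ms : MultiplierSystem k) {ι : Type} [Fintype ι] [DecidableEq ι]
    (Γ : Subgroup SL2Z) (ρ : Γ →* GL ι ℂ) (F : ℍ → ι → ℂ) : Prop :=
  (∀ i, MemM k ms fun τ => F τ i) ∧
    ∀ γ : Γ, slashV k ms F (γ : SL2Z) =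
      fun τ => ((ρ γ : GL ι ℂ) : Matrix ι ι ℂ).mulVec (F τ)

/-- `F ∈ 𝓢(k,ρ,Γ)`: a cuspidal vector-valued modular form. -/
def MemSV (k : ℝ) (ms : MultiplierSystem k) {ι : Type} [Fintype ι] [DecidableEq ι]
    (Γ : Subgroup SL2Z) (ρ : Γ →* GL ι ℂ) (F : ℍ → ι → ℂ) : Prop :=
  (∀ i, MemS k ms fun τ => F τ i) ∧
    ∀ γ : Γ, slashV k ms F (γ : SL2Z) =
      fun τ => ((ρ γ : GL ι ℂ) : Matrix ι ι ℂ).mulVec (F τ)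

/-- `ρ` is a unitary representation. -/
def IsUnitaryRep {ι : Type} [Fintype ι] [DecidableEq ι] {Γ : Subgroup SL2Z}
    (ρ : Γ →* GL ι ℂ) : Prop :=
  ∀ γ : Γ, ((ρ γ : GL ι ℂ) : Matrix ι ι ℂ) ∈ Matrix.unitaryGroup ι ℂ

/-- `ρ` is a normal representation (conditions (N1) and (N2)). -/
def IsNormalRep (κ : ℝ) {ι : Type} [Fintype ι] [DecidableEq ι] {Γ : Subgroup SL2Z}
    (ρ : Γ →* GL ι ℂ) : Prop :=
  (∀ h : (-1 : SL2Z) ∈ Γ, ((ρ ⟨-1, h⟩ : GL ι ℂ) : Matrix ι ι ℂ) = 1) ∧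
    ∀ (σ : SL2Z) (M : ℕ), 0 < M → ∀ h : σ * Tm ^ M * σ⁻¹ ∈ Γ,
      ∃ N : ℕ, 0 < N ∧
        (Complex.exp (2 * Real.pi * Complex.I * κ * M) •
          ((ρ ⟨σ * Tm ^ M * σ⁻¹, h⟩ : GL ι ℂ) : Matrix ι ι ℂ)) ^ N = 1

/-- The `SL₂(ℝ)`-invariant measure `dv(x+iy) = dx dy / y²` on `ℍ`. -/
def hyp : Measure ℍ :=
  Measure.comap (fun τ : ℍ => (τ : ℂ))
    ((volume : Measure ℂ).withDensity fun z => ENNReal.ofReal (1 / z.im ^ 2))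

/-- `R ⊆ Γ` is a complete set of representatives for the right cosets `Λ\Γ`. -/
def IsRepSet {Γ : Subgroup SL2Z} (Λ : Subgroup SL2Z) (R : Set Γ) : Prop :=
  ∀ γ : Γ, ∃! r, r ∈ R ∧ ((γ * r⁻¹ : Γ) : SL2Z) ∈ Λ

/-- The Poincaré series `P_{Λ\Γ,ρ} f = Σ_{γ ∈ Λ\Γ} f|_{k,ρ}γ`, summed over a set `R` of
representatives of `Λ\Γ`. -/
def PSeries (k : ℝ) (ms : MultiplierSystem k) {ι : Type} [Fintype ι] [DecidableEq ι]
    {Γ : Subgroup SL2Z} (ρ : Γ →* GL ι ℂ) (R : Set Γ) (f : ℍ → ι → ℂ) : ℍ → ι → ℂ :=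
  fun τ i => ∑' r : R, slashRho k ms ρ f (r : Γ) τ i

/-- The saturation `Λ.A` of a subset `A ⊆ ℍ` under a subgroup `Λ ≤ SL₂(ℤ)`. -/
def orbH (Λ : Subgroup SL2Z) (A : Set ℍ) : Set ℍ :=
  {τ | ∃ l ∈ Λ, ∃ a ∈ A, (l : SL2Z) • a = τ}

/-- The embedding `SL₂(ℤ) → SL₂(ℝ)`. -/
def toR : SL2Z →* SL2R := Matrix.SpecialLinearGroup.map (Int.castRingHom ℝ)

/-- The saturation `Λ.C` of a subset `C ⊆ SL₂(ℝ)` under left translation by `Λ ≤ SL₂(ℤ)`. -/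
def orbG (Λ : Subgroup SL2Z) (C : Set SL2R) : Set SL2R :=
  {g | ∃ l ∈ Λ, ∃ c ∈ C, toR l * c = g}

/-- `D` is a fundamental domain for the action of `Λ ≤ SL₂(ℤ)` on `ℍ`, w.r.t. the
invariant measure `dv`. -/
def IsFundDomH (Λ : Subgroup SL2Z) (D : Set ℍ) : Prop :=
  NullMeasurableSet D hyp ∧ (∀ᵐ τ ∂hyp, ∃ l ∈ Λ, (l : SL2Z) • τ ∈ D) ∧
    ∀ l₁ l₂ : SL2Z, l₁ ∈ Λ → l₂ ∈ Λ → l₁ ≠ l₂ →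
      AEDisjoint hyp ((fun τ => l₁ • τ) '' D) ((fun τ => l₂ • τ) '' D)

/-- `E` is a fundamental domain for the left translation action of `Λ ≤ SL₂(ℤ)` on
`SL₂(ℝ)`, w.r.t. the measure `μ`. -/
def IsFundDomG (Λ : Subgroup SL2Z) (μ : Measure SL2R) (E : Set SL2R) : Prop :=
  NullMeasurableSet E μ ∧ (∀ᵐ g ∂μ, ∃ l ∈ Λ, toR l * g ∈ E) ∧
    ∀ l₁ l₂ : SL2Z, l₁ ∈ Λ → l₂ ∈ Λ → l₁ ≠ l₂ →
      AEDisjoint μ ((fun g => toR l₁ * g) '' E) ((fun g => toR l₂ * g) '' E)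

/-- `μG` is the Haar measure on `SL₂(ℝ)` with the normalization
`∫_{SL₂(ℝ)} φ(g) dg = (1/2π) ∫₀^{2π} ∫_ℍ φ(n_x a_y κ_θ) dv(x+iy) dθ`. -/
def IsHaarNorm (μG : Measure SL2R) : Prop :=
  ∀ φ : SL2R → ℝ, Continuous φ → HasCompactSupport φ →
    ∫ g, φ g ∂μG =
      (1 / (2 * Real.pi)) *
        ∫ θ in (0:ℝ)..(2 * Real.pi), ∫ τ : ℍ, φ (nMat τ.re * aMat τ.im τ.im_pos * kMat θ) ∂hyp

set_option maxHeartbeats 1000000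

section Aux
lemma jf_eq_denom (γ : SL2Z) (τ : ℍ) : jf γ τ = UpperHalfPlane.denom γ τ := by
  rw [ModularGroup.denom_apply]; rfl

lemma jf_ne_zero (γ : SL2Z) (τ : ℍ) : jf γ τ ≠ 0 := by
  rw [jf_eq_denom]; exact UpperHalfPlane.denom_ne_zero _ _

lemma v_ne_zero {k : ℝ} (ms : MultiplierSystem k) (γ : SL2Z) : ms.v γ ≠ 0 := by
  intro h
  have := ms.unitary γ
  rw [h] at this; simp at this

lemma jf_cpow_ne_zero (γ : SL2Z) (τ : ℍ) (w : ℂ) : jf γ τ ^ w ≠ 0 := by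
  simp [Complex.cpow_eq_zero_iff, jf_ne_zero γ τ]

lemma slash_comp (k : ℝ) (ms : MultiplierSystem k) {ι : Type} (F : ℍ → ι → ℂ)
    (γ₁ γ₂ : SL2Z) :
    slashV k ms F (γ₁ * γ₂) = fun τ => slashV k ms (slashV k ms F γ₁) γ₂ τ := by
  funext τ i
  simp only [slashV]
  rw [mul_smul]
  have hc := ms.cocycle γ₁ γ₂ τ
  have h1 : (ms.v (γ₁ * γ₂))⁻¹ * jf (γ₁ * γ₂) τ ^ (-k : ℂ) =
      ((ms.v γ₂)⁻¹ * jf γ₂ τ ^ (-k : ℂ)) * ((ms.v γ₁)⁻¹ * jf γ₁ (γ₂ • τ) ^ (-k : ℂ)) := by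
    simp only [Complex.cpow_neg]
    rw [← mul_inv, ← mul_inv, ← mul_inv, hc]
    ring_nf
  rw [mul_assoc ((ms.v γ₂)⁻¹)] at h1 ⊢
  rw [show (ms.v γ₁)⁻¹ * jf γ₁ (γ₂ • τ) ^ (-k:ℂ) * F (γ₁ • γ₂ • τ) i =
    ((ms.v γ₁)⁻¹ * jf γ₁ (γ₂ • τ) ^ (-k:ℂ)) * F (γ₁ • γ₂ • τ) i from by ring]
  rw [← mul_assoc, ← mul_assoc]
  rw [show (ms.v (γ₁*γ₂))⁻¹ * jf (γ₁*γ₂) τ ^ (-k:ℂ) * F (γ₁ • γ₂ • τ) i =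
    ((ms.v (γ₁*γ₂))⁻¹ * jf (γ₁*γ₂) τ ^ (-k:ℂ)) * F (γ₁ • γ₂ • τ) i from by ring, h1]
  ring
end Aux
section Aux2
lemma Tm_pow_coe (m : ℕ) : (Tm ^ m).1 = !![1, (m : ℤ); 0, 1] := by
  induction m with
  | zero => simp [Matrix.one_fin_two]
  | succ n ih =>
    rw [pow_succ, Matrix.SpecialLinearGroup.coe_mul, ih]
    show _ = !![1, ((n : ℤ) + 1); 0, 1]
    rw [show (Tm : Matrix (Fin 2) (Fin 2) ℤ) = !![1,1;0,1] from rfl]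
    rw [Matrix.mul_fin_two]
    norm_num [add_comm]

lemma jf_Tm_pow (m : ℕ) (τ : ℍ) : jf (Tm ^ m) τ = 1 := by
  simp only [jf, Tm_pow_coe]
  norm_num

lemma jf_one (τ : ℍ) : jf 1 τ = 1 := by
  simp [jf]

lemma v_one {k : ℝ} (ms : MultiplierSystem k) : ms.v 1 = 1 := by
  have hc := ms.cocycle 1 1 ptI
  simp only [mul_one, jf_one, Complex.one_cpow] at hc
  exact (mul_eq_right₀ (v_ne_zero ms 1)).mp hc.symm

lemma v_Tm_pow {k : ℝ} (ms : MultiplierSystem k) (m : ℕ) :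
    ms.v (Tm ^ m) = ms.v Tm ^ m := by
  induction m with
  | zero => rw [pow_zero, pow_zero]; exact v_one ms
  | succ n ih =>
    have hc := ms.cocycle (Tm ^ n) Tm ptI
    rw [← pow_succ] at hc
    rw [jf_Tm_pow, show jf Tm = jf (Tm ^ 1) from by rw [pow_one], jf_Tm_pow, jf_Tm_pow] at hc
    simp only [Complex.one_cpow, mul_one] at hc
    rw [hc, ih, pow_succ]

lemma Tm_pow_smul (m : ℕ) (τ : ℍ) : ((Tm ^ m • τ : ℍ) : ℂ) = (τ : ℂ) + m := by
  rw [UpperHalfPlane.specialLinearGroup_apply, UpperHalfPlane.coe_mk]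
  simp only [show ∀ i j, ((Tm ^ m) i j : ℤ) = !![1, (m : ℤ); 0, 1] i j from
    fun i j => by rw [← Tm_pow_coe]]
  norm_num
end Aux2
section Aux3
lemma matrix_eq_one_of_fix {ι : Type} [Fintype ι] [DecidableEq ι] (G : ℍ → ι → ℂ)
    (hind : LinearIndependent ℂ fun i : ι => (fun τ => G τ i : ℍ → ℂ))
    (B : Matrix ι ι ℂ) (hB : ∀ τ, B.mulVec (G τ) = G τ) : B = 1 := by
  ext i j
  have key : ∀ l : ι, (fun l => B i l - (1 : Matrix ι ι ℂ) i l) l = 0 := by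
    apply Fintype.linearIndependent_iff.mp hind
    funext τ
    have h1 : (B.mulVec (G τ)) i = G τ i := by rw [hB τ]
    simp only [Matrix.mulVec, dotProduct] at h1
    simp only [Finset.sum_apply, Pi.smul_apply, smul_eq_mul, sub_mul, Pi.zero_apply,
      Finset.sum_sub_distrib, h1, Matrix.one_apply]
    rw [Finset.sum_congr rfl (fun l _ => by
      rw [show (if i = l then (1:ℂ) else 0) * G τ l = if i = l then G τ l else 0 from by
        split <;> simp])]
    rw [Finset.sum_ite_eq Finset.univ i (fun l => G τ l)]
    simp [h1]
  have := key j
  simp only [sub_eq_zero] at this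
  exact this

lemma linIndep_slash {k : ℝ} (ms : MultiplierSystem k) {ι : Type} [Fintype ι]
    (F : ℍ → ι → ℂ)
    (hind : LinearIndependent ℂ fun i : ι => (fun τ => F τ i : ℍ → ℂ)) (σ : SL2Z) :
    LinearIndependent ℂ fun i : ι => (fun τ => slashV k ms F σ τ i : ℍ → ℂ) := by
  rw [Fintype.linearIndependent_iff] at hind ⊢
  intro g hg
  apply hind
  funext τ
  have h := congrFun hg (σ⁻¹ • τ)
  simp only [Finset.sum_apply, Pi.smul_apply, smul_eq_mul, Pi.zero_apply, slashV] at h ⊢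
  have hs : σ • σ⁻¹ • τ = τ := by rw [← mul_smul, mul_inv_cancel, one_smul]
  rw [hs] at h
  have hc : (ms.v σ)⁻¹ * jf σ (σ⁻¹ • τ) ^ (-k : ℂ) ≠ 0 :=
    mul_ne_zero (inv_ne_zero (v_ne_zero ms σ)) (jf_cpow_ne_zero σ _ _)
  have h2 : ((ms.v σ)⁻¹ * jf σ (σ⁻¹ • τ) ^ (-k : ℂ)) * ∑ i, g i * F τ i = 0 := by
    rw [Finset.mul_sum]; rw [← h]; apply Finset.sum_congr rfl; intro i _; ring
  exact (mul_eq_zero.mp h2).resolve_left hc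
end Aux3
section Aux4
lemma fourier_periodic {h : ℤ} {g : ℍ → ℂ} (hf : HasFourierFrom h g) :
    ∃ N : ℕ, 0 < N ∧ ∀ τ τ' : ℍ, (τ' : ℂ) = (τ : ℂ) + N → g τ' = g τ := by
  obtain ⟨N, hN, a, ha⟩ := hf
  refine ⟨N, hN, fun τ τ' hττ' => ?_⟩
  have h1 := ha τ
  have h2 := ha τ'
  have hNe : (N : ℂ) ≠ 0 := Nat.cast_ne_zero.mpr hN.ne'
  have heq : (fun n : ℕ =>
      a n * Complex.exp (2 * Real.pi * Complex.I * (((h + n : ℤ) : ℂ) / (N : ℂ)) * (τ' : ℂ))) =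
      fun n : ℕ =>
      a n * Complex.exp (2 * Real.pi * Complex.I * (((h + n : ℤ) : ℂ) / (N : ℂ)) * (τ : ℂ)) := by
    funext n
    rw [hττ']
    have harg : 2 * (Real.pi : ℂ) * Complex.I * (((h + n : ℤ) : ℂ) / (N : ℂ)) * ((τ : ℂ) + N) =
        2 * (Real.pi : ℂ) * Complex.I * (((h + n : ℤ) : ℂ) / (N : ℂ)) * (τ : ℂ) +
          ((h + n : ℤ) : ℂ) * (2 * (Real.pi : ℂ) * Complex.I) := by
      field_simp
    rw [harg, Complex.exp_add, Complex.exp_int_mul_two_pi_mul_I]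
    ring
  rw [heq] at h2
  exact h2.unique h1

lemma periodic_smul {g : ℍ → ℂ} {N : ℕ}
    (hper : ∀ τ τ' : ℍ, (τ' : ℂ) = (τ : ℂ) + N → g τ' = g τ) :
    ∀ (c : ℕ) (τ : ℍ), g (Tm ^ (c * N) • τ) = g τ := by
  intro c
  induction c with
  | zero => intro τ; simp
  | succ n ih =>
    intro τ
    have : Tm ^ ((n + 1) * N) • τ = Tm ^ (n * N) • (Tm ^ N • τ) := by
      rw [← mul_smul, ← pow_add]
      ring_nf
    rw [this, ih, hper τ (Tm ^ N • τ) (Tm_pow_smul N τ)]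
end Aux4
theorem normality_conditions_of_linearIndependent
    {ι : Type} [Fintype ι] [DecidableEq ι]
    (k κ : ℝ) (ms : MultiplierSystem k)
    (hκ : κ ∈ Set.Ico (0:ℝ) 1)
    (hκT : ms.v Tm = Complex.exp (2 * Real.pi * Complex.I * κ))
    (Γ : Subgroup SL2Z) (hneg : (-1 : SL2Z) ∈ Γ) (hfin : Γ.FiniteIndex)
    (ρ : Γ →* GL ι ℂ)
    (F : ℍ → ι → ℂ) (hF : MemFV k ms Γ ρ F)
    (hind : LinearIndependent ℂ fun i : ι => (fun τ => F τ i : ℍ → ℂ)) :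
    ((ρ ⟨-1, hneg⟩ : GL ι ℂ) : Matrix ι ι ℂ) = 1 ∧
      ∀ (σ : SL2Z) (M : ℕ), 0 < M → ∀ h : σ * Tm ^ M * σ⁻¹ ∈ Γ,
        ∃ N : ℕ, 0 < N ∧
          (Complex.exp (2 * Real.pi * Complex.I * κ * M) •
            ((ρ ⟨σ * Tm ^ M * σ⁻¹, h⟩ : GL ι ℂ) : Matrix ι ι ℂ)) ^ N = 1 := by
  constructor
  · -- Part 1
    have heq := hF.2 ⟨-1, hneg⟩
    apply matrix_eq_one_of_fix F hind
    intro τ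
    have h1 := congrFun heq τ
    rw [← h1]
    funext i
    show (ms.v (-1))⁻¹ * jf (-1) τ ^ (-k : ℂ) * F ((-1 : SL2Z) • τ) i = F τ i
    have hsm : (-1 : SL2Z) • τ = τ := by
      rw [show (-1 : SL2Z) = -(1 : SL2Z) from rfl, ModularGroup.SL_neg_smul, one_smul]
    have hjf : jf (-1 : SL2Z) τ = -1 := by
      simp [jf, Matrix.SpecialLinearGroup.coe_neg, Matrix.one_fin_two]
    rw [hsm, hjf, ← ms.neg_one]
    rw [inv_mul_cancel₀ (v_ne_zero ms (-1)), one_mul]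
  · -- Part 2
    intro σ M hM h
    set Rm : Matrix ι ι ℂ := ((ρ ⟨σ * Tm ^ M * σ⁻¹, h⟩ : GL ι ℂ) : Matrix ι ι ℂ) with hRm
    set e : ℂ := Complex.exp (2 * Real.pi * Complex.I * κ * M) with he
    set G : ℍ → ι → ℂ := slashV k ms F σ with hG
    have step1 : slashV k ms G (Tm ^ M) = fun τ => Rm.mulVec (G τ) := by
      have e1 : slashV k ms F (σ * Tm ^ M) = fun τ => slashV k ms G (Tm ^ M) τ :=
        slash_comp k ms F σ (Tm ^ M)
      have e2 : σ * Tm ^ M = (σ * Tm ^ M * σ⁻¹) * σ := by group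
      have e3 : slashV k ms F ((σ * Tm ^ M * σ⁻¹) * σ) =
          fun τ => slashV k ms (slashV k ms F (σ * Tm ^ M * σ⁻¹)) σ τ :=
        slash_comp k ms F _ σ
      have e4 : slashV k ms F (σ * Tm ^ M * σ⁻¹) = fun τ => Rm.mulVec (F τ) :=
        hF.2 ⟨σ * Tm ^ M * σ⁻¹, h⟩
      funext τ i
      have e3' : slashV k ms F (σ * Tm ^ M) =
          fun τ => slashV k ms (slashV k ms F (σ * Tm ^ M * σ⁻¹)) σ τ := by
        exact (congrArg (slashV k ms F) e2).trans e3
      have e5 : slashV k ms G (Tm ^ M) τ i =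
          slashV k ms (fun τ => Rm.mulVec (F τ)) σ τ i := by
        rw [← e4]
        exact congrFun (congrFun (e1.symm.trans e3') τ) i
      rw [e5]
      show (ms.v σ)⁻¹ * jf σ τ ^ (-k : ℂ) * (Rm.mulVec (F (σ • τ))) i = (Rm.mulVec (G τ)) i
      simp only [Matrix.mulVec, dotProduct, hG, slashV, Finset.mul_sum]
      exact Finset.sum_congr rfl fun j _ => by ring
    have hvTM : ms.v (Tm ^ M) = e := by
      rw [v_Tm_pow, hκT, ← Complex.exp_nat_mul, he]
      congr 1
      push_cast
      ring
    have step2 : ∀ τ, G (Tm ^ M • τ) = (e • Rm).mulVec (G τ) := by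
      intro τ
      have h2 := congrFun step1 τ
      funext i
      have h3 := congrFun h2 i
      show G (Tm ^ M • τ) i = _
      rw [Matrix.smul_mulVec, Pi.smul_apply, smul_eq_mul]
      have h4 : (ms.v (Tm ^ M))⁻¹ * jf (Tm ^ M) τ ^ (-k : ℂ) * G (Tm ^ M • τ) i =
          (Rm.mulVec (G τ)) i := h3
      rw [jf_Tm_pow, Complex.one_cpow, mul_one, hvTM] at h4
      have hene : e ≠ 0 := Complex.exp_ne_zero _
      field_simp at h4
      rw [mul_comm] at h4
      exact h4.trans (mul_comm _ _)
    have step3 : ∀ (n : ℕ) (τ : ℍ),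
        G (Tm ^ (n * M) • τ) = ((e • Rm) ^ n).mulVec (G τ) := by
      intro n
      induction n with
      | zero => intro τ; simp [Matrix.one_mulVec]
      | succ c ih =>
        intro τ
        have hmm : Tm ^ ((c + 1) * M) • τ = Tm ^ (c * M) • (Tm ^ M • τ) := by
          rw [← mul_smul, ← pow_add]
          ring_nf
        rw [hmm, ih, step2, Matrix.mulVec_mulVec, ← pow_succ]
    have hGi : ∀ i : ι, ∃ N : ℕ, 0 < N ∧
        ∀ τ τ' : ℍ, (τ' : ℂ) = (τ : ℂ) + N → G τ' i = G τ i := by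
      intro i
      obtain ⟨h0, hfour⟩ := (hF.1 i).2 σ
      obtain ⟨N, hN, hper⟩ := fourier_periodic hfour
      exact ⟨N, hN, fun τ τ' hh => hper τ τ' hh⟩
    choose Nf hNf hperf using hGi
    have hPpos : 0 < ∏ i, Nf i := Finset.prod_pos (fun i _ => hNf i)
    have hfix : ∀ τ, ((e • Rm) ^ (∏ i, Nf i)).mulVec (G τ) = G τ := by
      intro τ
      rw [← step3 (∏ i, Nf i) τ]
      funext i
      obtain ⟨c, hc⟩ : Nf i ∣ (∏ j, Nf j) * M :=
        Dvd.dvd.mul_right (Finset.dvd_prod_of_mem _ (Finset.mem_univ i)) M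
      rw [show (∏ j, Nf j) * M = c * Nf i from by rw [hc]; ring]
      exact periodic_smul (g := fun τ => G τ i) (hperf i) c τ
    have hA := matrix_eq_one_of_fix G (linIndep_slash ms F hind σ) _ hfix
    exact ⟨∏ i, Nf i, hPpos, hA⟩
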